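/- Let κ be a regular uncountable cardinal with κ^ω = κ. Every κ-Borel subset of κ^κ is the projection of a κ-closed subset of κ^κ × κ^κ; consequently every κ-Σ¹₁ set (projection of a κ-Borel set) is the projection of a κ-closed set. -/

import Mathlib

open Cardinal Set

universe u v w

namespace GDST

variable {K : Type u} {A : Type v}

/-- The set `N_η` determined by the partial function with domain `Y` and values given by `η`. -/
def nbhd (Y : Set K) (η : K → A) : Set (K → A) := {ζ | ∀ i ∈ Y, ζ i = η i}

/-- Basic κ-open subsets of `K → K`: sets `N_η` where `η` is a partial function with
domain of size `< #K`, together with the empty set. -/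
def IsBasicOpen (S : Set (K → A)) : Prop :=
  (∃ (Y : Set K) (η : K → A), #Y < #K ∧ S = nbhd Y η) ∨ S = ∅

/-- Open in the topology generated by the basic κ-open sets. -/
def IsOpenStd (U : Set (K → A)) : Prop :=
  ∀ ζ ∈ U, ∃ S : Set (K → A), IsBasicOpen S ∧ ζ ∈ S ∧ S ⊆ U

/-- A union of at most `μ` basic κ-open sets; `(κ,μ)`-open. -/
def IsMuOpen (μ : Cardinal.{u}) (U : Set (K → A)) : Prop :=
  ∃ (ι : Type u) (f : ι → Set (K → A)), #ι ≤ μ ∧ (∀ i, IsBasicOpen (f i)) ∧ U = ⋃ i, f i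

/-- `(κ,μ)`-closed: the complement is `(κ,μ)`-open. -/
def IsMuClosed (μ : Cardinal.{u}) (C : Set (K → A)) : Prop := IsMuOpen μ Cᶜ

/-- The `(κ,μ)`-Borel sets: the smallest class containing the basic κ-open sets and closed
under complements and unions and intersections of length at most `μ`. -/
inductive MuBorel (μ : Cardinal.{u}) : Set (K → A) → Prop
  | basic (S : Set (K → A)) : IsBasicOpen S → MuBorel μ S
  | compl (S : Set (K → A)) : MuBorel μ S → MuBorel μ Sᶜ
  | iUnion (ι : Type u) (f : ι → Set (K → A)) : #ι ≤ μ → (∀ i, MuBorel μ (f i)) →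
      MuBorel μ (⋃ i, f i)
  | iInter (ι : Type u) (f : ι → Set (K → A)) : #ι ≤ μ → (∀ i, MuBorel μ (f i)) →
      MuBorel μ (⋂ i, f i)

/-- κ-open: a union of at most `κ = #K` basic κ-open sets. -/
def IsKOpen (U : Set (K → A)) : Prop := IsMuOpen #K U

/-- κ-closed. -/
def IsKClosed (C : Set (K → A)) : Prop := IsMuClosed #K C

/-- κ-Borel. -/
def KBorel (S : Set (K → A)) : Prop := MuBorel #K S

/- Product space versions, for subsets of `(K → A) × (K → B)`. -/
section Prod

variable {B : Type w}

/-- Basic κ-open subsets of the product: products of basic κ-open sets. -/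
def IsBasicOpen2 (S : Set ((K → A) × (K → B))) : Prop :=
  ∃ (S₁ : Set (K → A)) (S₂ : Set (K → B)), IsBasicOpen S₁ ∧ IsBasicOpen S₂ ∧ S = S₁ ×ˢ S₂

def IsOpenStd2 (U : Set ((K → A) × (K → B))) : Prop :=
  ∀ p ∈ U, ∃ S, IsBasicOpen2 S ∧ p ∈ S ∧ S ⊆ U

def IsMuOpen2 (μ : Cardinal.{u}) (U : Set ((K → A) × (K → B))) : Prop :=
  ∃ (ι : Type u) (f : ι → Set ((K → A) × (K → B))),
    #ι ≤ μ ∧ (∀ i, IsBasicOpen2 (f i)) ∧ U = ⋃ i, f i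

def IsMuClosed2 (μ : Cardinal.{u}) (C : Set ((K → A) × (K → B))) : Prop := IsMuOpen2 μ Cᶜ

inductive MuBorel2 (μ : Cardinal.{u}) : Set ((K → A) × (K → B)) → Prop
  | basic (S : Set ((K → A) × (K → B))) : IsBasicOpen2 S → MuBorel2 μ S
  | compl (S : Set ((K → A) × (K → B))) : MuBorel2 μ S → MuBorel2 μ Sᶜ
  | iUnion (ι : Type u) (f : ι → Set ((K → A) × (K → B))) : #ι ≤ μ → (∀ i, MuBorel2 μ (f i)) →
      MuBorel2 μ (⋃ i, f i)
  | iInter (ι : Type u) (f : ι → Set ((K → A) × (K → B))) : #ι ≤ μ → (∀ i, MuBorel2 μ (f i)) →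
      MuBorel2 μ (⋂ i, f i)

def IsKOpen2 (U : Set ((K → A) × (K → B))) : Prop := IsMuOpen2 #K U

def IsKClosed2 (C : Set ((K → A) × (K → B))) : Prop := IsMuClosed2 #K C

def KBorel2 (S : Set ((K → A) × (K → B))) : Prop := MuBorel2 #K S

/-- κ-Σ¹₁ : projections of κ-Borel subsets of the product. -/
def KSigma11 (S : Set (K → A)) : Prop :=
  ∃ C : Set ((K → A) × (K → A)), KBorel2 C ∧ S = Prod.fst '' C

end Prod

end GDST
namespace GDST

section Aux

variable {K : Type u}

lemma nonempty_of_aleph0_le (hK : ℵ₀ ≤ #K) : Nonempty K := by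
  rw [← Cardinal.mk_ne_zero_iff]
  intro h
  rw [h] at hK
  exact (Cardinal.aleph0_ne_zero) (le_antisymm (le_of_le_of_eq hK rfl) zero_le) |>.elim

lemma nbhd_empty_dom (η : K → K) : nbhd (∅ : Set K) η = Set.univ := by
  ext ζ; simp [nbhd]

lemma isBasicOpen_univ (hK : ℵ₀ ≤ #K) : IsBasicOpen (Set.univ : Set (K → K)) := by
  have h0 : Nonempty K := nonempty_of_aleph0_le hK
  obtain ⟨a⟩ := h0
  refine Or.inl ⟨∅, fun _ => a, ?_, (nbhd_empty_dom _).symm⟩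
  simp only [Cardinal.mk_emptyCollection]
  exact lt_of_lt_of_le Cardinal.aleph0_pos hK

lemma isBasicOpen_empty : IsBasicOpen (∅ : Set (K → K)) := Or.inr rfl

/-- intersection of basic open sets is basic open -/
lemma isBasicOpen_inter (hK : ℵ₀ ≤ #K) {S T : Set (K → K)}
    (hS : IsBasicOpen S) (hT : IsBasicOpen T) : IsBasicOpen (S ∩ T) := by
  classical
  rcases hS with ⟨Y₁, η₁, hY₁, rfl⟩ | rfl
  · rcases hT with ⟨Y₂, η₂, hY₂, rfl⟩ | rfl
    · by_cases hcomp : ∀ k, k ∈ Y₁ → k ∈ Y₂ → η₁ k = η₂ k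
      · refine Or.inl ⟨Y₁ ∪ Y₂, fun k => if k ∈ Y₁ then η₁ k else η₂ k, ?_, ?_⟩
        · exact lt_of_le_of_lt (Cardinal.mk_union_le _ _) (Cardinal.add_lt_of_lt hK hY₁ hY₂)
        · ext ζ
          simp only [nbhd, mem_inter_iff, mem_setOf_eq, mem_union]
          constructor
          · rintro ⟨h1, h2⟩ k hk
            rcases hk with hk | hk
            · simp [hk, h1 k hk]
            · by_cases hk1 : k ∈ Y₁
              · simp [hk1, h1 k hk1]
              · simp [hk1, h2 k hk]
          · intro h
            refine ⟨fun k hk => ?_, fun k hk => ?_⟩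
            · have := h k (Or.inl hk); simpa [hk] using this
            · have := h k (Or.inr hk)
              by_cases hk1 : k ∈ Y₁
              · rw [hcomp k hk1 hk] at *; simpa [hk1] using this
              · simpa [hk1] using this
      · push_neg at hcomp
        obtain ⟨k, hk1, hk2, hne⟩ := hcomp
        refine Or.inr ?_
        ext ζ
        simp only [nbhd, mem_inter_iff, mem_setOf_eq, mem_empty_iff_false, iff_false]
        rintro ⟨h1, h2⟩
        exact hne ((h1 k hk1).symm.trans (h2 k hk2))
    · simp [isBasicOpen_empty]
  · simp [isBasicOpen_empty]

/-- preimage of a basic open set under a coordinate re-indexing map is basic open -/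
lemma isBasicOpen_preimage (hK : ℵ₀ ≤ #K) {g : K → K} (hg : Function.Injective g)
    {S : Set (K → K)} (hS : IsBasicOpen S) :
    IsBasicOpen ((fun z : K → K => z ∘ g) ⁻¹' S) := by
  have h0 : Nonempty K := nonempty_of_aleph0_le hK
  rcases hS with ⟨Y, η, hY, rfl⟩ | rfl
  · refine Or.inl ⟨g '' Y, η ∘ Function.invFun g, ?_, ?_⟩
    · rwa [Cardinal.mk_image_eq hg]
    · ext ζ
      simp only [nbhd, mem_preimage, mem_setOf_eq, Function.comp_apply]
      constructor
      · rintro h k ⟨i, hi, rfl⟩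
        rw [Function.leftInverse_invFun hg i]
        exact h i hi
      · intro h i hi
        have := h (g i) ⟨i, hi, rfl⟩
        rwa [Function.leftInverse_invFun hg i] at this
  · simp [isBasicOpen_empty]

end Aux

end GDST
namespace GDST

section Aux2

variable {K : Type u}

lemma isBasicOpen2_prod {S₁ S₂ : Set (K → K)} (h1 : IsBasicOpen S₁) (h2 : IsBasicOpen S₂) :
    IsBasicOpen2 (S₁ ×ˢ S₂) := ⟨S₁, S₂, h1, h2, rfl⟩

lemma isBasicOpen2_empty (hK : ℵ₀ ≤ #K) : IsBasicOpen2 (∅ : Set ((K → K) × (K → K))) := by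
  have : (∅ : Set ((K → K) × (K → K))) = (∅ : Set (K → K)) ×ˢ (∅ : Set (K → K)) := by simp
  rw [this]
  exact isBasicOpen2_prod isBasicOpen_empty isBasicOpen_empty

lemma isBasicOpen2_inter (hK : ℵ₀ ≤ #K) {S T : Set ((K → K) × (K → K))}
    (hS : IsBasicOpen2 S) (hT : IsBasicOpen2 T) : IsBasicOpen2 (S ∩ T) := by
  obtain ⟨S₁, S₂, hS₁, hS₂, rfl⟩ := hS
  obtain ⟨T₁, T₂, hT₁, hT₂, rfl⟩ := hT
  rw [prod_inter_prod]
  exact isBasicOpen2_prod (isBasicOpen_inter hK hS₁ hT₁) (isBasicOpen_inter hK hS₂ hT₂)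

/-- preimage of a basic open rectangle under `(x, z) ↦ (x, z ∘ g)` -/
lemma isBasicOpen2_preimage_snd (hK : ℵ₀ ≤ #K) {g : K → K} (hg : Function.Injective g)
    {S : Set ((K → K) × (K → K))} (hS : IsBasicOpen2 S) :
    IsBasicOpen2 ((fun q : (K → K) × (K → K) => (q.1, q.2 ∘ g)) ⁻¹' S) := by
  obtain ⟨S₁, S₂, h1, h2, rfl⟩ := hS
  have : (fun q : (K → K) × (K → K) => (q.1, q.2 ∘ g)) ⁻¹' (S₁ ×ˢ S₂)
      = S₁ ×ˢ ((fun z : K → K => z ∘ g) ⁻¹' S₂) := by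
    ext ⟨x, z⟩; simp [mem_prod]
  rw [this]
  exact isBasicOpen2_prod h1 (isBasicOpen_preimage hK hg h2)

/-- every basic open set is κ-closed -/
lemma isKClosed_of_basic (hK : ℵ₀ ≤ #K) {S : Set (K → K)} (hS : IsBasicOpen S) :
    IsKClosed S := by
  classical
  rcases hS with ⟨Y, η, hY, rfl⟩ | rfl
  · refine ⟨↥Y × K, fun t => if t.2 = η t.1 then ∅ else nbhd {(t.1 : K)} (fun _ => t.2), ?_, ?_, ?_⟩
    · have : #(↥Y × K) = #Y * #K := by simp
      rw [this]
      calc #Y * #K ≤ #K * #K := by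
            exact mul_le_mul' hY.le le_rfl
        _ = #K := Cardinal.mul_eq_self hK
    · intro t
      dsimp only
      split
      · exact isBasicOpen_empty
      · refine Or.inl ⟨{(t.1 : K)}, fun _ => t.2, ?_, rfl⟩
        rw [Cardinal.mk_singleton]
        exact lt_of_lt_of_le Cardinal.one_lt_aleph0 hK
    · ext ζ
      simp only [nbhd, mem_compl_iff, mem_setOf_eq, mem_iUnion, not_forall]
      constructor
      · rintro ⟨i, hi, hne⟩
        refine ⟨⟨⟨i, hi⟩, ζ i⟩, ?_⟩
        simp only [hne, if_neg]
        intro k hk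
        simp only [mem_singleton_iff] at hk
        rw [hk]
      · rintro ⟨⟨⟨i, hi⟩, a⟩, ht⟩
        by_cases ha : a = η i
        · simp [ha] at ht
        · simp only [if_neg ha] at ht
          have : ζ i = a := ht i rfl
          exact ⟨i, hi, by rw [this]; exact ha⟩
  · refine ⟨PUnit, fun _ => Set.univ, ?_, fun _ => isBasicOpen_univ hK, by rw [compl_empty, iUnion_const]⟩
    have : #PUnit.{u+1} = 1 := by simp
    rw [this]
    exact le_trans Cardinal.one_lt_aleph0.le hK

lemma isKClosed2_prod_univ (hK : ℵ₀ ≤ #K) {S : Set (K → K)} (hS : IsKClosed S) :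
    IsKClosed2 (S ×ˢ (Set.univ : Set (K → K))) := by
  obtain ⟨ι, f, hι, hb, heq⟩ := hS
  refine ⟨ι, fun i => f i ×ˢ Set.univ, hι, fun i => isBasicOpen2_prod (hb i) (isBasicOpen_univ hK), ?_⟩
  ext ⟨x, y⟩
  have : x ∈ Sᶜ ↔ ∃ i, x ∈ f i := by rw [heq]; simp
  simp only [mem_compl_iff, mem_prod, mem_univ, and_true, mem_iUnion]
  rw [← mem_compl_iff] at *
  exact this

/-- the key property: being the projection of a κ-closed set -/
def ProjClosed (X : Set (K → K)) : Prop :=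
  ∃ C : Set ((K → K) × (K → K)), IsKClosed2 C ∧ X = Prod.fst '' C

lemma projClosed_of_isKClosed (hK : ℵ₀ ≤ #K) {S : Set (K → K)} (hS : IsKClosed S) :
    ProjClosed S := by
  have h0 : Nonempty K := nonempty_of_aleph0_le hK
  refine ⟨S ×ˢ Set.univ, isKClosed2_prod_univ hK hS, ?_⟩
  rw [fst_image_prod]
  exact ⟨id, mem_univ _⟩

end Aux2

end GDST
namespace GDST

section Aux3

variable {K : Type u}

lemma sigma_card_le (hK : ℵ₀ ≤ #K) {ι : Type u} (hι : #ι ≤ #K) {ιs : ι → Type u}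
    (hcard : ∀ i, #(ιs i) ≤ #K) : #(Σ i, ιs i) ≤ #K := by
  rw [Cardinal.mk_sigma]
  calc (Cardinal.sum fun i => #(ιs i)) ≤ Cardinal.sum fun _ : ι => #K :=
        Cardinal.sum_le_sum _ _ hcard
    _ = #ι * #K := Cardinal.sum_const' _ _
    _ ≤ #K * #K := mul_le_mul' hι le_rfl
    _ = #K := Cardinal.mul_eq_self hK

lemma projClosed_iUnion (hK : ℵ₀ ≤ #K) {ι : Type u} (hι : #ι ≤ #K)
    {f : ι → Set (K → K)} (hf : ∀ i, ProjClosed (f i)) : ProjClosed (⋃ i, f i) := by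
  classical
  obtain ⟨j⟩ := (Cardinal.le_def ι K).mp hι
  obtain ⟨e⟩ : Nonempty (Option K ≃ K) := Cardinal.eq.mp (by simp [Cardinal.add_one_eq hK])
  choose C hC hproj using hf
  choose ιs fs hcard hbasic heq using hC
  set g : K → K := fun m => e (some m) with hgdef
  have hg : Function.Injective g := fun a b hab => Option.some.inj (e.injective hab)
  have hsing : #({e none} : Set K) < #K := by
    rw [Cardinal.mk_singleton]
    exact lt_of_lt_of_le Cardinal.one_lt_aleph0 hK
  set U : Set ((K → K) × (K → K)) :=
    ⋃ t : K ⊕ (Σ i, ιs i),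
      Sum.elim
        (fun a => (Set.univ : Set (K → K)) ×ˢ
          (if a ∈ Set.range j then ∅ else nbhd {e none} fun _ => a))
        (fun s => ((Set.univ : Set (K → K)) ×ˢ nbhd {e none} (fun _ => j s.1)) ∩
          ((fun q : (K → K) × (K → K) => (q.1, q.2 ∘ g)) ⁻¹' fs s.1 s.2)) t
    with hU
  have hCc : ∀ i (q : (K → K) × (K → K)), q ∈ C i ↔ ∀ l, q ∉ fs i l := by
    intro i q
    constructor
    · intro hq l hl
      have hc : q ∈ (C i)ᶜ := by rw [heq i]; exact mem_iUnion.mpr ⟨l, hl⟩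
      exact hc hq
    · intro h
      by_contra hq
      have hc : q ∈ (C i)ᶜ := hq
      rw [heq i] at hc
      obtain ⟨l, hl⟩ := mem_iUnion.mp hc
      exact h l hl
  have hmemU : ∀ x z, (x, z) ∈ U ↔
      (z (e none) ∉ Set.range j) ∨ ∃ i l, z (e none) = j i ∧ (x, z ∘ g) ∈ fs i l := by
    intro x z
    simp only [hU, mem_iUnion, Sum.exists, Sum.elim_inl, Sum.elim_inr, Sigma.exists,
      mem_inter_iff, mem_preimage, mem_prod, mem_univ, true_and, nbhd, mem_setOf_eq,
      mem_singleton_iff, forall_eq]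
    constructor
    · rintro (⟨a, ha⟩ | ⟨i, l, ⟨h1, h2⟩⟩)
      · by_cases hr : a ∈ Set.range j
        · rw [if_pos hr] at ha; exact absurd ha (notMem_empty _)
        · rw [if_neg hr] at ha
          simp only [nbhd, mem_setOf_eq, mem_singleton_iff, forall_eq] at ha
          left; rwa [ha]
      · exact Or.inr ⟨i, l, h1, h2⟩
    · rintro (h | ⟨i, l, h1, h2⟩)
      · refine Or.inl ⟨z (e none), ?_⟩
        rw [if_neg h]
        simp [nbhd]
      · exact Or.inr ⟨i, l, h1, h2⟩
  have hmemUc : ∀ x z, (x, z) ∈ Uᶜ ↔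
      (z (e none) ∈ Set.range j) ∧ ∀ i, z (e none) = j i → (x, z ∘ g) ∈ C i := by
    intro x z
    rw [mem_compl_iff, hmemU]
    push_neg
    simp only [hCc]
    constructor
    · rintro ⟨h1, h2⟩; exact ⟨h1, fun i hi l => h2 i l hi⟩
    · rintro ⟨h1, h2⟩; exact ⟨h1, fun i l hi => h2 i hi l⟩
  refine ⟨Uᶜ, ?_, ?_⟩
  · show IsMuOpen2 _ Uᶜᶜ
    rw [compl_compl]
    refine ⟨K ⊕ (Σ i, ιs i), _, ?_, ?_, hU⟩
    · simp only [Cardinal.mk_sum, Cardinal.lift_id]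
      calc #K + #(Σ i, ιs i) ≤ #K + #K :=
            add_le_add le_rfl (sigma_card_le hK hι hcard)
        _ = #K := Cardinal.add_eq_self hK
    · rintro (a | s)
      · simp only [Sum.elim_inl]
        refine isBasicOpen2_prod (isBasicOpen_univ hK) ?_
        split
        · exact isBasicOpen_empty
        · exact Or.inl ⟨{e none}, fun _ => a, hsing, rfl⟩
      · simp only [Sum.elim_inr]
        refine isBasicOpen2_inter hK
          (isBasicOpen2_prod (isBasicOpen_univ hK)
            (Or.inl ⟨{e none}, fun _ => j s.1, hsing, rfl⟩)) ?_
        exact isBasicOpen2_preimage_snd hK hg (hbasic s.1 s.2)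
  · ext x
    simp only [mem_iUnion, mem_image]
    constructor
    · rintro ⟨i, hx⟩
      rw [hproj i] at hx
      obtain ⟨q, hq, hqx⟩ := hx
      set z : K → K := fun k => (e.symm k).elim (j i) q.2 with hz
      refine ⟨(x, z), ?_, rfl⟩
      rw [hmemUc]
      have hz1 : z (e none) = j i := by simp [hz]
      have hz2 : z ∘ g = q.2 := by
        funext m; simp [hz, hgdef]
      refine ⟨⟨i, hz1.symm⟩, fun i' hi' => ?_⟩
      have hii : i' = i := j.injective (by rw [← hz1, hi'])
      rw [hii, hz2, ← hqx, Prod.mk.eta]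
      exact hq
    · rintro ⟨q, hq, hqx⟩
      rw [← Prod.mk.eta (p := q), hmemUc] at hq
      obtain ⟨⟨i, hji⟩, h2⟩ := hq
      refine ⟨i, ?_⟩
      rw [hproj i]
      exact ⟨(q.1, q.2 ∘ g), h2 i hji.symm, hqx⟩

lemma projClosed_iInter (hK : ℵ₀ ≤ #K) {ι : Type u} (hι : #ι ≤ #K)
    {f : ι → Set (K → K)} (hf : ∀ i, ProjClosed (f i)) : ProjClosed (⋂ i, f i) := by
  classical
  obtain ⟨j⟩ := (Cardinal.le_def ι K).mp hι
  obtain ⟨p⟩ : Nonempty (K × K ≃ K) := Cardinal.eq.mp (by simp [Cardinal.mul_eq_self hK])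
  choose C hC hproj using hf
  choose ιs fs hcard hbasic heq using hC
  set g : ι → K → K := fun i m => p (j i, m) with hgdef
  have hg : ∀ i, Function.Injective (g i) := by
    intro i a b hab
    have := p.injective hab
    exact ((Prod.mk.injEq _ _ _ _).mp this).2
  set U : Set ((K → K) × (K → K)) :=
    ⋃ s : Σ i, ιs i, (fun q : (K → K) × (K → K) => (q.1, q.2 ∘ g s.1)) ⁻¹' fs s.1 s.2 with hU
  have hCc : ∀ i (q : (K → K) × (K → K)), q ∈ C i ↔ ∀ l, q ∉ fs i l := by
    intro i q
    constructor
    · intro hq l hl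
      have hc : q ∈ (C i)ᶜ := by rw [heq i]; exact mem_iUnion.mpr ⟨l, hl⟩
      exact hc hq
    · intro h
      by_contra hq
      have hc : q ∈ (C i)ᶜ := hq
      rw [heq i] at hc
      obtain ⟨l, hl⟩ := mem_iUnion.mp hc
      exact h l hl
  have hmemUc : ∀ x z, (x, z) ∈ Uᶜ ↔ ∀ i, (x, z ∘ g i) ∈ C i := by
    intro x z
    simp only [hU, mem_compl_iff, mem_iUnion, Sigma.exists, not_exists, mem_preimage]
    simp only [hCc]
  refine ⟨Uᶜ, ?_, ?_⟩
  · show IsMuOpen2 _ Uᶜᶜ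
    rw [compl_compl]
    refine ⟨Σ i, ιs i, _, sigma_card_le hK hι hcard, ?_, hU⟩
    intro s
    exact isBasicOpen2_preimage_snd hK (hg s.1) (hbasic s.1 s.2)
  · ext x
    simp only [mem_iInter, mem_image]
    constructor
    · intro hx
      have hy : ∀ i, ∃ y, (x, y) ∈ C i := by
        intro i
        have hxi := hx i
        rw [hproj i] at hxi
        obtain ⟨q, hq, hqx⟩ := hxi
        refine ⟨q.2, ?_⟩
        rw [← hqx, Prod.mk.eta]
        exact hq
      choose y hy using hy
      set z : K → K := fun k =>
        if h : ∃ i, j i = (p.symm k).1 then y h.choose (p.symm k).2 else k with hz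
      refine ⟨(x, z), ?_, rfl⟩
      rw [hmemUc]
      intro i
      have hzg : z ∘ g i = y i := by
        funext m
        have h1 : p.symm (p (j i, m)) = (j i, m) := p.symm_apply_apply _
        have hex : ∃ i', j i' = (p.symm (p (j i, m))).1 := ⟨i, by rw [h1]⟩
        simp only [hz, Function.comp_apply, hgdef]
        rw [dif_pos hex]
        have hch : hex.choose = i := j.injective (by rw [hex.choose_spec, h1])
        rw [hch, h1]
      rw [hzg]
      exact hy i
    · rintro ⟨q, hq, hqx⟩ i
      rw [hproj i]
      rw [← Prod.mk.eta (p := q), hmemUc] at hq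
      exact ⟨(q.1, q.2 ∘ g i), hq i, hqx⟩

end Aux3

end GDST
namespace GDST

section Aux4

variable {K : Type u}

lemma projClosed_of_kborel (hK : ℵ₀ ≤ #K) {X : Set (K → K)} (hX : KBorel X) :
    ProjClosed X ∧ ProjClosed Xᶜ := by
  induction hX with
  | basic S hS =>
    refine ⟨projClosed_of_isKClosed hK (isKClosed_of_basic hK hS), ?_⟩
    obtain ⟨ι, f, hι, hb, heq⟩ := isKClosed_of_basic hK hS
    rw [heq]
    exact projClosed_iUnion hK hι fun i =>
      projClosed_of_isKClosed hK (isKClosed_of_basic hK (hb i))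
  | compl S hS ih => exact ⟨ih.2, by rw [compl_compl]; exact ih.1⟩
  | iUnion ι f hι hf ih =>
    exact ⟨projClosed_iUnion hK hι fun i => (ih i).1,
      by rw [compl_iUnion]; exact projClosed_iInter hK hι fun i => (ih i).2⟩
  | iInter ι f hι hf ih =>
    exact ⟨projClosed_iInter hK hι fun i => (ih i).1,
      by rw [compl_iInter]; exact projClosed_iUnion hK hι fun i => (ih i).2⟩

lemma inl_inj (e₂ : (K ⊕ K) ≃ K) : Function.Injective (fun m : K => e₂ (Sum.inl m)) :=
  fun _ _ h => Sum.inl.inj (e₂.injective h)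

lemma inr_inj (e₂ : (K ⊕ K) ≃ K) : Function.Injective (fun m : K => e₂ (Sum.inr m)) :=
  fun _ _ h => Sum.inr.inj (e₂.injective h)

lemma kborel_preimage (hK : ℵ₀ ≤ #K) (e₂ : (K ⊕ K) ≃ K) {C : Set ((K → K) × (K → K))}
    (hC : KBorel2 C) :
    KBorel ((fun u : K → K =>
      (u ∘ fun m => e₂ (Sum.inl m), u ∘ fun m => e₂ (Sum.inr m))) ⁻¹' C) := by
  induction hC with
  | basic S hS =>
    obtain ⟨S₁, S₂, h1, h2, rfl⟩ := hS
    rw [mk_preimage_prod]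
    exact MuBorel.basic _ (isBasicOpen_inter hK
      (isBasicOpen_preimage hK (inl_inj e₂) h1) (isBasicOpen_preimage hK (inr_inj e₂) h2))
  | compl S hS ih => rw [preimage_compl]; exact MuBorel.compl _ ih
  | iUnion ι f hι hf ih => rw [preimage_iUnion]; exact MuBorel.iUnion _ _ hι ih
  | iInter ι f hι hf ih => rw [preimage_iInter]; exact MuBorel.iInter _ _ hι ih

lemma isBasicOpen2_elim_pre (hK : ℵ₀ ≤ #K) (e₂ : (K ⊕ K) ≃ K) {S : Set (K → K)}
    (hS : IsBasicOpen S) :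
    IsBasicOpen2 {q : (K → K) × (K → K) | Sum.elim q.1 q.2 ∘ e₂.symm ∈ S} := by
  rcases hS with ⟨Y, η, hY, rfl⟩ | rfl
  · have hsplit : {q : (K → K) × (K → K) | Sum.elim q.1 q.2 ∘ e₂.symm ∈ nbhd Y η}
        = nbhd {m | e₂ (Sum.inl m) ∈ Y} (fun m => η (e₂ (Sum.inl m))) ×ˢ
          nbhd {m | e₂ (Sum.inr m) ∈ Y} (fun m => η (e₂ (Sum.inr m))) := by
      ext ⟨x, y⟩
      simp only [mem_setOf_eq, nbhd, mem_prod]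
      constructor
      · intro h
        constructor
        · intro m hm
          have := h (e₂ (Sum.inl m)) hm
          simpa using this
        · intro m hm
          have := h (e₂ (Sum.inr m)) hm
          simpa using this
      · rintro ⟨h1, h2⟩ k hk
        rcases hsk : e₂.symm k with m | m
        · have hk' : e₂ (Sum.inl m) = k := by rw [← hsk, Equiv.apply_symm_apply]
          have hx := h1 m (by rw [hk']; exact hk)
          show Sum.elim x y (e₂.symm k) = η k
          rw [hsk]
          simp only [Sum.elim_inl]
          rw [hx, hk']
        · have hk' : e₂ (Sum.inr m) = k := by rw [← hsk, Equiv.apply_symm_apply]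
          have hx := h2 m (by rw [hk']; exact hk)
          show Sum.elim x y (e₂.symm k) = η k
          rw [hsk]
          simp only [Sum.elim_inr]
          rw [hx, hk']
    rw [hsplit]
    refine isBasicOpen2_prod (Or.inl ⟨_, _, ?_, rfl⟩) (Or.inl ⟨_, _, ?_, rfl⟩)
    · exact lt_of_le_of_lt
        (Cardinal.mk_preimage_of_injective _ Y (inl_inj e₂)) hY
    · exact lt_of_le_of_lt
        (Cardinal.mk_preimage_of_injective _ Y (inr_inj e₂)) hY
  · have h : {q : (K → K) × (K → K) | Sum.elim q.1 q.2 ∘ e₂.symm ∈ (∅ : Set (K → K))} = ∅ := by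
      ext q; simp
    rw [h]
    exact isBasicOpen2_empty hK

lemma isBasicOpen2_theta (hK : ℵ₀ ≤ #K) (e₂ : (K ⊕ K) ≃ K) {S : Set ((K → K) × (K → K))}
    (hS : IsBasicOpen2 S) :
    IsBasicOpen2 ((fun q : (K → K) × (K → K) =>
      (Sum.elim q.1 (q.2 ∘ fun m => e₂ (Sum.inl m)) ∘ e₂.symm,
        q.2 ∘ fun m => e₂ (Sum.inr m))) ⁻¹' S) := by
  obtain ⟨S₁, S₂, h1, h2, rfl⟩ := hS
  have hsplit : (fun q : (K → K) × (K → K) =>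
      (Sum.elim q.1 (q.2 ∘ fun m => e₂ (Sum.inl m)) ∘ e₂.symm,
        q.2 ∘ fun m => e₂ (Sum.inr m))) ⁻¹' (S₁ ×ˢ S₂)
      = ((fun q : (K → K) × (K → K) => (q.1, q.2 ∘ fun m => e₂ (Sum.inl m))) ⁻¹'
          {p : (K → K) × (K → K) | Sum.elim p.1 p.2 ∘ e₂.symm ∈ S₁}) ∩
        ((fun q : (K → K) × (K → K) => (q.1, q.2 ∘ fun m => e₂ (Sum.inr m))) ⁻¹'
          ((Set.univ : Set (K → K)) ×ˢ S₂)) := by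
    ext ⟨x, w⟩
    simp [mem_prod]
  rw [hsplit]
  exact isBasicOpen2_inter hK
    (isBasicOpen2_preimage_snd hK (inl_inj e₂) (isBasicOpen2_elim_pre hK e₂ h1))
    (isBasicOpen2_preimage_snd hK (inr_inj e₂) (isBasicOpen2_prod (isBasicOpen_univ hK) h2))

lemma projClosed_of_kSigma11 (hK : ℵ₀ ≤ #K) {S : Set (K → K)} (hS : KSigma11 S) :
    ProjClosed S := by
  classical
  obtain ⟨C, hC, rfl⟩ := hS
  obtain ⟨e₂⟩ : Nonempty ((K ⊕ K) ≃ K) := Cardinal.eq.mp (by simp [Cardinal.add_eq_self hK])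
  set g₁ : K → K := fun m => e₂ (Sum.inl m) with hg₁def
  set g₂ : K → K := fun m => e₂ (Sum.inr m) with hg₂def
  have helim₁ : ∀ x y : K → K, (Sum.elim x y ∘ e₂.symm) ∘ g₁ = x := by
    intro x y; funext m; simp [hg₁def]
  have helim₂ : ∀ x y : K → K, (Sum.elim x y ∘ e₂.symm) ∘ g₂ = y := by
    intro x y; funext m; simp [hg₂def]
  have hrecomp : ∀ u : K → K, (Sum.elim (u ∘ g₁) (u ∘ g₂) ∘ e₂.symm) = u := by
    intro u; funext k
    rcases hsk : e₂.symm k with m | m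
    · have hk' : e₂ (Sum.inl m) = k := by rw [← hsk, Equiv.apply_symm_apply]
      simp only [Function.comp_apply, hsk, Sum.elim_inl, hg₁def]
      rw [hk']
    · have hk' : e₂ (Sum.inr m) = k := by rw [← hsk, Equiv.apply_symm_apply]
      simp only [Function.comp_apply, hsk, Sum.elim_inr, hg₂def]
      rw [hk']
  have hB : KBorel ((fun u : K → K => (u ∘ g₁, u ∘ g₂)) ⁻¹' C) := kborel_preimage hK e₂ hC
  obtain ⟨D, hD, hDeq⟩ := (projClosed_of_kborel hK hB).1
  set Θ : (K → K) × (K → K) → (K → K) × (K → K) :=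
    fun q => (Sum.elim q.1 (q.2 ∘ g₁) ∘ e₂.symm, q.2 ∘ g₂) with hΘ
  refine ⟨Θ ⁻¹' D, ?_, ?_⟩
  · obtain ⟨ιD, fD, hcard, hb, heq⟩ := hD
    refine ⟨ιD, fun i => Θ ⁻¹' fD i, hcard, fun i => isBasicOpen2_theta hK e₂ (hb i), ?_⟩
    rw [← preimage_compl, heq, preimage_iUnion]
  · ext x
    simp only [mem_image, mem_preimage]
    constructor
    · rintro ⟨q, hq, hqx⟩
      set u : K → K := Sum.elim q.1 q.2 ∘ e₂.symm with hu
      have huC : u ∈ (fun u : K → K => (u ∘ g₁, u ∘ g₂)) ⁻¹' C := by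
        rw [mem_preimage, hu, helim₁, helim₂, Prod.mk.eta]
        exact hq
      rw [hDeq] at huC
      obtain ⟨d, hd, hdu⟩ := huC
      refine ⟨(x, Sum.elim (u ∘ g₂) d.2 ∘ e₂.symm), ?_, rfl⟩
      show (Sum.elim x ((Sum.elim (u ∘ g₂) d.2 ∘ e₂.symm) ∘ g₁) ∘ e₂.symm,
            (Sum.elim (u ∘ g₂) d.2 ∘ e₂.symm) ∘ g₂) ∈ D
      have hpair : (Sum.elim x ((Sum.elim (u ∘ g₂) d.2 ∘ e₂.symm) ∘ g₁) ∘ e₂.symm,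
            (Sum.elim (u ∘ g₂) d.2 ∘ e₂.symm) ∘ g₂) = d := by
        have h1 : (Sum.elim (u ∘ g₂) d.2 ∘ e₂.symm) ∘ g₁ = u ∘ g₂ := helim₁ _ _
        have h2 : (Sum.elim (u ∘ g₂) d.2 ∘ e₂.symm) ∘ g₂ = d.2 := helim₂ _ _
        have hx : x = u ∘ g₁ := by
          rw [← hqx]
          exact (helim₁ q.1 q.2).symm
        have h3 : Sum.elim x (u ∘ g₂) ∘ e₂.symm = d.1 := by
          rw [hx, hrecomp, hdu]
        rw [h1, h2, h3, Prod.mk.eta]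
      rw [hpair]
      exact hd
    · rintro ⟨q, hq, hqx⟩
      have hu : (Sum.elim q.1 (q.2 ∘ g₁) ∘ e₂.symm) ∈ Prod.fst '' D := ⟨Θ q, hq, rfl⟩
      rw [← hDeq, mem_preimage, helim₁, helim₂] at hu
      exact ⟨(q.1, q.2 ∘ g₁), hu, hqx⟩

end Aux4

end GDST

namespace GDST

/-- Let κ be regular uncountable with κ^ω = κ. Every κ-Borel subset of κ^κ
is the projection of a κ-closed subset of κ^κ × κ^κ; consequently every κ-Σ¹₁ set is the
projection of a κ-closed set. -/
theorem statement13 (K : Type u) (hreg : (#K).IsRegular) (hunc : ℵ₀ < #K)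
    (hpow : (#K) ^ (ℵ₀ : Cardinal.{u}) = #K) :
    (∀ X : Set (K → K), KBorel X →
      ∃ C : Set ((K → K) × (K → K)), IsKClosed2 C ∧ X = Prod.fst '' C) ∧
    (∀ S : Set (K → K), KSigma11 S →
      ∃ C : Set ((K → K) × (K → K)), IsKClosed2 C ∧ S = Prod.fst '' C) := by
  have hK : ℵ₀ ≤ #K := hunc.le
  exact ⟨fun X hX => (projClosed_of_kborel hK hX).1, fun S hS => projClosed_of_kSigma11 hK hS⟩

end GDST
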